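/- For all s, s′ ∈ ℂ^N_𝒱 such that every entry of F·s − F·s′ is a Gaussian integer, one has s_n = s′_n for all n ∈ {1,…,N−1} (i.e., s_{1:N−1} can be uniquely recovered from the modulo measurements) if and only if every monic irreducible factor of X^N − 1 in ℚ(i)[X] other than X − 1 has a root of the form exp(2πi·n/N) with n ∈ 𝒱. -/

import Mathlib

open Polynomial IntermediateField

noncomputable def dft (N : ℕ) : Matrix (Fin N) (Fin N) ℂ :=
  Matrix.of fun n₁ n₂ : Fin N => (1 / Real.sqrt N : ℂ) *
    Complex.exp (-(2 * Real.pi * Complex.I * (n₁ : ℕ) * (n₂ : ℕ)) / N)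

/-- A complex number is a Gaussian integer if its real and imaginary parts are integers. -/
def IsGaussianInt (z : ℂ) : Prop := ∃ a b : ℤ, z = (a : ℂ) + (b : ℂ) * Complex.I

/-- Identifiability of the modulo-DFT sensing model on `ℂ^N_𝒱`: any two signals
supported off `𝒱` whose DFT images differ by a Gaussian integer vector coincide. -/
def ModuloDFTIdentifiable (N : ℕ) (V : Set ℕ) : Prop :=
  ∀ s s' : Fin N → ℂ,
    (∀ n : Fin N, (n : ℕ) ∈ V → s n = 0) →
    (∀ n : Fin N, (n : ℕ) ∈ V → s' n = 0) →
    (∀ m : Fin N, IsGaussianInt ((dft N).mulVec s m - (dft N).mulVec s' m)) →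
    s = s'

lemma I_integral : IsIntegral ℚ Complex.I := by
  refine ⟨X ^ 2 + 1, ?_, ?_⟩
  · exact Polynomial.monic_X_pow_add (by simp)
  · simp [Complex.I_sq]

lemma mem_QI {x : ℂ} (hx : x ∈ ℚ⟮Complex.I⟯) : ∃ a b : ℚ, x = (a : ℂ) + (b : ℂ) * Complex.I := by
  have h : x ∈ Algebra.adjoin ℚ {Complex.I} := by
    rw [← IntermediateField.adjoin_simple_toSubalgebra_of_isAlgebraic I_integral.isAlgebraic]
    exact hx
  clear hx
  induction h using Algebra.adjoin_induction with
  | mem y hy =>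
      rcases hy with rfl
      exact ⟨0, 1, by simp⟩
  | algebraMap r => exact ⟨r, 0, by simp⟩
  | add y z hy hz ihy ihz =>
      obtain ⟨a, b, rfl⟩ := ihy; obtain ⟨c, d, rfl⟩ := ihz
      exact ⟨a + c, b + d, by push_cast; ring⟩
  | mul y z hy hz ihy ihz =>
      obtain ⟨a, b, rfl⟩ := ihy; obtain ⟨c, d, rfl⟩ := ihz
      refine ⟨a * c - b * d, a * d + b * c, ?_⟩
      push_cast
      ring_nf
      rw [Complex.I_sq]
      ring

lemma dft_apply_eq (N : ℕ) (n m : Fin N) :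
    dft N n m = (1 / (Real.sqrt N : ℂ)) *
      ((Complex.exp (2 * Real.pi * Complex.I / N)) ^ ((n : ℕ) * (m : ℕ)))⁻¹ := by
  show (1 / Real.sqrt N : ℂ) * Complex.exp (-(2 * Real.pi * Complex.I * (n : ℕ) * (m : ℕ)) / N) = _
  congr 1
  rw [← Complex.exp_nat_mul, ← Complex.exp_neg]
  congr 1
  push_cast
  ring

lemma orth {N : ℕ} (hN : 0 < N) (ω : ℂ) (hω : IsPrimitiveRoot ω N) (j k : Fin N) :
    ∑ m : Fin N, ω ^ ((j : ℕ) * m) * (ω ^ ((k : ℕ) * m))⁻¹ = if j = k then (N : ℂ) else 0 := by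
  have hω0 : ω ≠ 0 := hω.ne_zero hN.ne'
  have key : ∀ m : ℕ, ω ^ ((j : ℕ) * m) * (ω ^ ((k : ℕ) * m))⁻¹ = (ω ^ (j : ℕ) * (ω ^ (k : ℕ))⁻¹) ^ m := by
    intro m
    rw [mul_pow, inv_pow, pow_mul, pow_mul]
  by_cases hjk : j = k
  · subst hjk
    simp only [if_pos rfl]
    have : ∀ m : Fin N, ω ^ ((j : ℕ) * m) * (ω ^ ((j : ℕ) * m))⁻¹ = 1 := by
      intro m; exact mul_inv_cancel₀ (pow_ne_zero _ hω0)
    rw [Finset.sum_congr rfl fun m _ => this m]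
    simp
  · rw [if_neg hjk]
    set u : ℂ := ω ^ (j : ℕ) * (ω ^ (k : ℕ))⁻¹ with hu
    have hu1 : u ≠ 1 := by
      intro h
      apply hjk
      have : ω ^ (j : ℕ) = ω ^ (k : ℕ) := by
        rw [hu] at h
        exact (mul_inv_eq_one₀ (pow_ne_zero _ hω0)).1 h
      exact Fin.ext (hω.pow_inj j.isLt k.isLt this)
    have huN : u ^ N = 1 := by
      rw [hu, mul_pow, inv_pow, ← pow_mul, ← pow_mul, mul_comm (j : ℕ) N, mul_comm (k : ℕ) N,
        pow_mul, pow_mul, hω.pow_eq_one, one_pow, one_pow, inv_one, mul_one]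
    calc ∑ m : Fin N, ω ^ ((j : ℕ) * m) * (ω ^ ((k : ℕ) * m))⁻¹
        = ∑ m ∈ Finset.range N, u ^ m := by
          rw [← Fin.sum_univ_eq_sum_range (fun m => u ^ m) N]
          exact Finset.sum_congr rfl fun m _ => key m
      _ = (u ^ N - 1) / (u - 1) := geom_sum_eq hu1 N
      _ = 0 := by rw [huN]; simp

lemma sqrtN_ne_zero {N : ℕ} (hN : 0 < N) : ((Real.sqrt N : ℝ) : ℂ) ≠ 0 := by
  have : (0 : ℝ) < Real.sqrt N := Real.sqrt_pos.2 (by exact_mod_cast hN)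
  exact_mod_cast this.ne'

lemma sqrtN_mul_self (N : ℕ) : ((Real.sqrt N : ℝ) : ℂ) * ((Real.sqrt N : ℝ) : ℂ) = (N : ℂ) := by
  rw [← Complex.ofReal_mul, Real.mul_self_sqrt (Nat.cast_nonneg N)]
  norm_cast

lemma inv_sqrt_mul_N {N : ℕ} (hN : 0 < N) :
    (1 / ((Real.sqrt N : ℝ) : ℂ)) * (N : ℂ) = ((Real.sqrt N : ℝ) : ℂ) := by
  rw [← sqrtN_mul_self N]
  field_simp

lemma dft_inv {N : ℕ} (hN : 0 < N) (d : Fin N → ℂ) (n : Fin N) :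
    ∑ m : Fin N, (dft N).mulVec d m * (Complex.exp (2 * Real.pi * Complex.I / N)) ^ ((n : ℕ) * (m : ℕ))
      = ((Real.sqrt N : ℝ) : ℂ) * d n := by
  set ω : ℂ := Complex.exp (2 * Real.pi * Complex.I / N) with hωdef
  have hω : IsPrimitiveRoot ω N := Complex.isPrimitiveRoot_exp N hN.ne'
  simp only [Matrix.mulVec, dotProduct, dft_apply_eq, ← hωdef, Finset.sum_mul]
  rw [Finset.sum_comm]
  have step : ∀ k : Fin N,
      ∑ m : Fin N, (1 / (Real.sqrt N : ℂ)) * (ω ^ ((m : ℕ) * (k : ℕ)))⁻¹ * d k * ω ^ ((n:ℕ) * (m:ℕ))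
        = d k * (1 / (Real.sqrt N : ℂ)) * (if n = k then (N : ℂ) else 0) := by
    intro k
    rw [← orth hN ω hω n k, Finset.mul_sum]
    refine Finset.sum_congr rfl fun m _ => ?_
    rw [mul_comm (m : ℕ) (k : ℕ)]
    ring
  rw [Finset.sum_congr rfl fun k _ => step k]
  simp only [mul_ite, mul_zero]
  rw [Finset.sum_ite_eq Finset.univ n (fun k => d k * (1 / (Real.sqrt N : ℂ)) * (N : ℂ))]
  simp only [Finset.mem_univ, if_pos]
  rw [mul_assoc, inv_sqrt_mul_N hN]
  ring

lemma dft_aeval {N : ℕ} (hN : 0 < N) (t : ℂ) (e : Fin N → ℂ) (m : Fin N) :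
    (dft N).mulVec (fun n => t * ∑ j : Fin N,
        e j * (Complex.exp (2 * Real.pi * Complex.I / N)) ^ ((n : ℕ) * (j : ℕ))) m
      = t * ((Real.sqrt N : ℝ) : ℂ) * e m := by
  set ω : ℂ := Complex.exp (2 * Real.pi * Complex.I / N) with hωdef
  have hω : IsPrimitiveRoot ω N := Complex.isPrimitiveRoot_exp N hN.ne'
  simp only [Matrix.mulVec, dotProduct, dft_apply_eq, ← hωdef, Finset.mul_sum]
  rw [Finset.sum_comm]
  have step : ∀ j : Fin N,
      ∑ n : Fin N, (1 / (Real.sqrt N : ℂ)) * (ω ^ ((m : ℕ) * (n : ℕ)))⁻¹ * (t * (e j * ω ^ ((n:ℕ) * (j:ℕ))))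
        = t * e j * (1 / (Real.sqrt N : ℂ)) * (if j = m then (N : ℂ) else 0) := by
    intro j
    rw [← orth hN ω hω j m, Finset.mul_sum]
    refine Finset.sum_congr rfl fun n _ => ?_
    rw [mul_comm (m : ℕ) (n : ℕ), mul_comm (n : ℕ) (j : ℕ)]
    ring
  rw [Finset.sum_congr rfl fun j _ => step j]
  simp only [mul_ite, mul_zero]
  rw [Finset.sum_ite_eq' Finset.univ m (fun j => t * e j * (1 / (Real.sqrt N : ℂ)) * (N : ℂ))]
  simp only [Finset.mem_univ, if_pos]
  rw [mul_assoc, inv_sqrt_mul_N hN]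
  ring

lemma rat_den_dvd_int (q : ℚ) (m : ℕ) (h : q.den ∣ m) : ∃ z : ℤ, (m : ℚ) * q = z := by
  obtain ⟨t, ht⟩ := h
  refine ⟨t * q.num, ?_⟩
  rw [ht]
  push_cast
  rw [mul_comm (q.den : ℚ) (t : ℚ), mul_assoc, mul_comm (q.den : ℚ) q, Rat.mul_den_eq_num]

theorem mp (N : ℕ) (hN : 0 < N) (V : Set ℕ) (hV : ∀ n ∈ V, n < N)
    (hid : ∀ s s' : Fin N → ℂ,
      (∀ n : Fin N, (n : ℕ) ∈ V → s n = 0) →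
      (∀ n : Fin N, (n : ℕ) ∈ V → s' n = 0) →
      (∀ m : Fin N, IsGaussianInt ((dft N).mulVec s m - (dft N).mulVec s' m)) →
      ∀ n : Fin N, (n : ℕ) ≠ 0 → s n = s' n) :
    (∀ c : Polynomial ℚ⟮Complex.I⟯, c.Monic → Irreducible c → c ∣ (X ^ N - 1) →
      c ≠ X - 1 →
      ∃ n ∈ V, Polynomial.aeval (Complex.exp (2 * Real.pi * Complex.I * n / N)) c = 0) := by
  intro c hmonic hirr hdvd hne
  by_contra hno
  push_neg at hno
  set ω : ℂ := Complex.exp (2 * Real.pi * Complex.I / N) with hωdef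
  have hω : IsPrimitiveRoot ω N := Complex.isPrimitiveRoot_exp N hN.ne'
  have hexp : ∀ k : ℕ, Complex.exp (2 * Real.pi * Complex.I * k / N) = ω ^ k := by
    intro k
    rw [hωdef, ← Complex.exp_nat_mul]
    congr 1
    ring
  have hno' : ∀ k ∈ V, aeval (ω ^ k) c ≠ 0 := by
    intro k hk
    have := hno k hk
    rwa [hexp k] at this
  obtain ⟨h, hch⟩ := hdvd
  -- degree of h is < N
  have hXN : (X ^ N - 1 : Polynomial ℚ⟮Complex.I⟯).Monic := by
    have := Polynomial.monic_X_pow_sub_C (1 : ℚ⟮Complex.I⟯) hN.ne'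
    simpa using this
  have hXNne : (X ^ N - 1 : Polynomial ℚ⟮Complex.I⟯) ≠ 0 := hXN.ne_zero
  have hcne0 : c ≠ 0 := hmonic.ne_zero
  have hhne0 : h ≠ 0 := by rintro rfl; rw [mul_zero] at hch; exact hXNne hch
  have hdegXN : (X ^ N - 1 : Polynomial ℚ⟮Complex.I⟯).natDegree = N := by
    have : (X ^ N - 1 : Polynomial ℚ⟮Complex.I⟯) = X ^ N - C 1 := by rw [map_one]
    rw [this, Polynomial.natDegree_X_pow_sub_C]
  have hdegh : h.natDegree < N := by
    have hdc : 0 < c.natDegree := hirr.natDegree_pos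
    have : N = c.natDegree + h.natDegree := by
      rw [← hdegXN, hch, Polynomial.natDegree_mul hcne0 hhne0]
    omega
  -- evaluation of h as a finite sum
  have hsum : ∀ x : ℂ, aeval x h = ∑ j : Fin N, ((h.coeff (j : ℕ) : ℚ⟮Complex.I⟯) : ℂ) * x ^ (j : ℕ) := by
    intro x
    rw [Polynomial.aeval_eq_sum_range' hdegh x, ← Fin.sum_univ_eq_sum_range
      (fun j => h.coeff j • x ^ j) N]
    exact Finset.sum_congr rfl fun j _ => by rw [Algebra.smul_def]; rfl
  -- rational coordinates of the coefficients
  have hco : ∀ j : Fin N, ∃ a b : ℚ, ((h.coeff (j : ℕ) : ℚ⟮Complex.I⟯) : ℂ) = (a : ℂ) + (b : ℂ) * Complex.I :=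
    fun j => mem_QI (h.coeff (j : ℕ)).2
  choose a b hab using hco
  set r : ℕ := ∏ j : Fin N, ((a j).den * (b j).den) with hrdef
  have hrpos : 0 < r := Finset.prod_pos fun j _ => Nat.mul_pos (a j).pos (b j).pos
  -- integer numerators after scaling by r
  have hza : ∀ j : Fin N, ∃ z : ℤ, ((r : ℚ)) * a j = z := by
    intro j
    refine rat_den_dvd_int (a j) r ?_
    exact dvd_trans (dvd_mul_right _ _) (Finset.dvd_prod_of_mem _ (Finset.mem_univ j))
  have hzb : ∀ j : Fin N, ∃ z : ℤ, ((r : ℚ)) * b j = z := by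
    intro j
    refine rat_den_dvd_int (b j) r ?_
    exact dvd_trans (dvd_mul_left _ _) (Finset.dvd_prod_of_mem _ (Finset.mem_univ j))
  choose za hza using hza
  choose zb hzb using hzb
  -- the counterexample signal
  set s : Fin N → ℂ := fun n => ((r : ℂ) / ((Real.sqrt N : ℝ) : ℂ)) * aeval (ω ^ (n : ℕ)) h
    with hsdef
  have hs_closed : s = fun n : Fin N => ((r : ℂ) / ((Real.sqrt N : ℝ) : ℂ)) *
      ∑ j : Fin N, ((h.coeff (j : ℕ) : ℚ⟮Complex.I⟯) : ℂ) * ω ^ ((n : ℕ) * (j : ℕ)) := by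
    funext n
    rw [hsdef]
    simp only
    rw [hsum (ω ^ (n : ℕ))]
    congr 1
    exact Finset.sum_congr rfl fun j _ => by rw [← pow_mul]
  -- s vanishes on V
  have haevXN : ∀ k : ℕ, aeval (ω ^ k) c * aeval (ω ^ k) h = 0 := by
    intro k
    rw [← map_mul, ← hch]
    simp only [map_sub, map_pow, aeval_X, map_one]
    rw [← pow_mul, mul_comm k N, pow_mul, hω.pow_eq_one, one_pow, sub_self]
  have hsV : ∀ n : Fin N, (n : ℕ) ∈ V → s n = 0 := by
    intro n hn
    have h0 : aeval (ω ^ (n : ℕ)) h = 0 := by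
      rcases mul_eq_zero.1 (haevXN n) with h' | h'
      · exact absurd h' (hno' _ hn)
      · exact h'
    rw [hsdef]
    simp only
    rw [h0, mul_zero]
  -- the measurements are Gaussian integers
  have hgauss : ∀ m : Fin N,
      IsGaussianInt ((dft N).mulVec s m - (dft N).mulVec (0 : Fin N → ℂ) m) := by
    intro m
    rw [Matrix.mulVec_zero]
    simp only [Pi.zero_apply, sub_zero]
    rw [hs_closed, dft_aeval hN]
    have hmul : (r : ℂ) / ((Real.sqrt N : ℝ) : ℂ) * ((Real.sqrt N : ℝ) : ℂ) = (r : ℂ) :=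
      div_mul_cancel₀ _ (sqrtN_ne_zero hN)
    rw [hmul, hab m]
    refine ⟨za m, zb m, ?_⟩
    have h1 : ((za m : ℚ) : ℂ) = ((r : ℚ) : ℂ) * ((a m : ℚ) : ℂ) := by
      rw [← hza m]; push_cast; ring
    have h2 : ((zb m : ℚ) : ℂ) = ((r : ℚ) : ℂ) * ((b m : ℚ) : ℂ) := by
      rw [← hzb m]; push_cast; ring
    push_cast at h1 h2 ⊢
    rw [h1, h2]
    ring
  -- find a root ω^k of c with k ≠ 0
  have hdegc : 0 < (c.map (algebraMap ℚ⟮Complex.I⟯ ℂ)).degree := by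
    rw [Polynomial.degree_map]
    exact Polynomial.natDegree_pos_iff_degree_pos.1 hirr.natDegree_pos
  obtain ⟨z, hz⟩ := Complex.exists_root hdegc
  have hzc : aeval z c = 0 := by
    rw [Polynomial.aeval_def, ← Polynomial.eval_map]
    exact hz
  have hzN : z ^ N = 1 := by
    have : aeval z c * aeval z h = 0 := by rw [hzc, zero_mul]
    rw [← map_mul, ← hch] at this
    simp only [map_sub, map_pow, aeval_X, map_one, sub_eq_zero] at this
    exact this
  haveI : NeZero N := ⟨hN.ne'⟩
  obtain ⟨k, hkN, hkz⟩ := hω.eq_pow_of_pow_eq_one hzN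
  have hk0 : k ≠ 0 := by
    rintro rfl
    rw [pow_zero] at hkz
    have h1c : aeval ((algebraMap ℚ⟮Complex.I⟯ ℂ) 1) c = 0 := by
      rw [map_one, hkz]; exact hzc
    have : c = X - C 1 := by
      rw [minpoly.eq_of_irreducible_of_monic hirr h1c hmonic, minpoly.eq_X_sub_C]
    rw [map_one] at this
    exact hne this
  -- h does not vanish at z = ω^k
  have hzne0 : z ≠ 0 := by
    intro h0
    rw [h0, zero_pow hN.ne'] at hzN
    exact zero_ne_one hzN
  have hzh : aeval z h ≠ 0 := by
    intro h0
    set cm := c.map (algebraMap ℚ⟮Complex.I⟯ ℂ) with hcm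
    set hm := h.map (algebraMap ℚ⟮Complex.I⟯ ℂ) with hhm
    have hPm : (X ^ N - 1 : ℂ[X]) = cm * hm := by
      rw [hcm, hhm, ← Polynomial.map_mul, ← hch]
      simp
    have hder : Polynomial.derivative (X ^ N - 1 : ℂ[X]) = C (N : ℂ) * X ^ (N - 1) := by
      rw [Polynomial.derivative_sub, Polynomial.derivative_one, Polynomial.derivative_X_pow,
        sub_zero]
    have heval : Polynomial.eval z (Polynomial.derivative (X ^ N - 1 : ℂ[X])) =
        (N : ℂ) * z ^ (N - 1) := by
      rw [hder]; simp
    have hevalne : ((N : ℂ)) * z ^ (N - 1) ≠ 0 := by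
      apply mul_ne_zero
      · exact_mod_cast hN.ne'
      · exact pow_ne_zero _ hzne0
    have hcm0 : Polynomial.eval z cm = 0 := hz
    have hhm0 : Polynomial.eval z hm = 0 := by
      rw [hhm, Polynomial.eval_map, ← Polynomial.aeval_def]
      exact h0
    rw [hPm, Polynomial.derivative_mul] at heval
    simp only [Polynomial.eval_add, Polynomial.eval_mul, hcm0, hhm0, mul_zero, zero_mul,
      add_zero, zero_add] at heval
    exact hevalne heval.symm
  -- contradiction with identifiability
  have hzeros : ∀ n : Fin N, (n : ℕ) ∈ V → (0 : Fin N → ℂ) n = 0 := fun _ _ => rfl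
  have := hid s 0 hsV hzeros hgauss ⟨k, hkN⟩ hk0
  simp only [Pi.zero_apply] at this
  rw [hsdef] at this
  simp only at this
  have hsk : ((r : ℂ) / ((Real.sqrt N : ℝ) : ℂ)) * aeval (ω ^ k) h ≠ 0 := by
    apply mul_ne_zero
    · apply div_ne_zero
      · exact_mod_cast hrpos.ne'
      · exact sqrtN_ne_zero hN
    · rw [hkz]; exact hzh
  exact hsk this

theorem mpr (N : ℕ) (hN : 0 < N) (V : Set ℕ) (hV : ∀ n ∈ V, n < N)
    (hpoly : ∀ c : Polynomial ℚ⟮Complex.I⟯, c.Monic → Irreducible c → c ∣ (X ^ N - 1) →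
      c ≠ X - 1 →
      ∃ n ∈ V, Polynomial.aeval (Complex.exp (2 * Real.pi * Complex.I * n / N)) c = 0) :
    (∀ s s' : Fin N → ℂ,
      (∀ n : Fin N, (n : ℕ) ∈ V → s n = 0) →
      (∀ n : Fin N, (n : ℕ) ∈ V → s' n = 0) →
      (∀ m : Fin N, IsGaussianInt ((dft N).mulVec s m - (dft N).mulVec s' m)) →
      ∀ n : Fin N, (n : ℕ) ≠ 0 → s n = s' n) := by
  intro s s' hs hs' hg n hn0
  set ω : ℂ := Complex.exp (2 * Real.pi * Complex.I / N) with hωdef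
  have hω : IsPrimitiveRoot ω N := Complex.isPrimitiveRoot_exp N hN.ne'
  have hexp : ∀ k : ℕ, Complex.exp (2 * Real.pi * Complex.I * k / N) = ω ^ k := by
    intro k
    rw [hωdef, ← Complex.exp_nat_mul]
    congr 1
    push_cast
    ring
  set d : Fin N → ℂ := fun k => s k - s' k with hddef
  have hFd : ∀ m : Fin N, (dft N).mulVec d m = (dft N).mulVec s m - (dft N).mulVec s' m := by
    intro m
    have : d = s - s' := rfl
    rw [this, Matrix.mulVec_sub]
    rfl
  -- Gaussian integer coefficients in ℚ⟮I⟯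
  have hmemQI : ∀ m : Fin N, ∃ gm : ℚ⟮Complex.I⟯, (gm : ℂ) = (dft N).mulVec d m := by
    intro m
    obtain ⟨a, b, hab⟩ := hg m
    refine ⟨⟨(a : ℂ) + (b : ℂ) * Complex.I, ?_⟩, by rw [hFd m, hab]⟩
    exact add_mem (intCast_mem _ a)
      (mul_mem (intCast_mem _ b) (mem_adjoin_simple_self ℚ Complex.I))
  choose g hgeq using hmemQI
  set G : Polynomial ℚ⟮Complex.I⟯ := ∑ m : Fin N, C (g m) * X ^ (m : ℕ) with hGdef
  have hGaev : ∀ k : Fin N, aeval (ω ^ (k : ℕ)) G = ((Real.sqrt N : ℝ) : ℂ) * d k := by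
    intro k
    rw [hGdef, map_sum, ← dft_inv hN d k]
    refine Finset.sum_congr rfl fun m _ => ?_
    rw [map_mul, aeval_C, map_pow, aeval_X, ← pow_mul, ← hgeq m]
    rfl
  -- vanishing on V
  have hGV : ∀ m : ℕ, m ∈ V → aeval (ω ^ m) G = 0 := by
    intro m hm
    have hmN : m < N := hV m hm
    have : aeval (ω ^ ((⟨m, hmN⟩ : Fin N) : ℕ)) G = ((Real.sqrt N : ℝ) : ℂ) * d ⟨m, hmN⟩ :=
      hGaev ⟨m, hmN⟩
    simp only [hddef] at this ⊢
    rw [this, hs ⟨m, hmN⟩ hm, hs' ⟨m, hmN⟩ hm, sub_zero, mul_zero]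
  -- the minimal polynomial of ω^n
  have hint : IsIntegral ℚ⟮Complex.I⟯ (ω ^ (n : ℕ)) := by
    refine ⟨X ^ N - 1, ?_, ?_⟩
    · have := Polynomial.monic_X_pow_sub_C (1 : ℚ⟮Complex.I⟯) hN.ne'
      simpa using this
    · simp only [eval₂_sub, eval₂_X_pow, eval₂_one]
      rw [← pow_mul, mul_comm (n : ℕ) N, pow_mul, hω.pow_eq_one, one_pow, sub_self]
  set c : Polynomial ℚ⟮Complex.I⟯ := minpoly ℚ⟮Complex.I⟯ (ω ^ (n : ℕ)) with hcdef
  have hcdvd : c ∣ X ^ N - 1 := by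
    apply minpoly.dvd
    simp only [map_sub, map_pow, aeval_X, map_one]
    rw [← pow_mul, mul_comm (n : ℕ) N, pow_mul, hω.pow_eq_one, one_pow, sub_self]
  have hcne : c ≠ X - 1 := by
    intro hc
    have h0 : aeval (ω ^ (n : ℕ)) c = 0 := minpoly.aeval _ _
    rw [hc] at h0
    simp only [map_sub, aeval_X, map_one, sub_eq_zero] at h0
    have : (n : ℕ) = 0 := hω.pow_inj n.isLt hN (by simpa using h0)
    exact hn0 this
  obtain ⟨m, hmV, hroot⟩ := hpoly c (minpoly.monic hint) (minpoly.irreducible hint) hcdvd hcne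
  rw [hexp m] at hroot
  -- c is also the minimal polynomial of ω^m, which divides G
  have hceq : c = minpoly ℚ⟮Complex.I⟯ (ω ^ m) :=
    minpoly.eq_of_irreducible_of_monic (minpoly.irreducible hint) hroot (minpoly.monic hint)
  have hcG : c ∣ G := by
    rw [hceq]
    exact minpoly.dvd _ _ (hGV m hmV)
  obtain ⟨q, hq⟩ := hcG
  have : aeval (ω ^ (n : ℕ)) G = 0 := by
    rw [hq, map_mul, show (aeval (ω ^ (n : ℕ))) c = 0 from minpoly.aeval _ _, zero_mul]
  rw [hGaev n] at this
  have hd0 : d n = 0 := by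
    rcases mul_eq_zero.1 this with h | h
    · exact absurd h (sqrtN_ne_zero hN)
    · exact h
  have := hd0
  simp only [hddef, sub_eq_zero] at this
  exact this

/-- the entries s₁,…,s_{N−1} are uniquely recoverable from the modulo-DFT
measurements iff every monic irreducible factor of X^N − 1 over ℚ(i) other than X − 1
has a root of the form e^{2πin/N} with n ∈ 𝒱. -/
theorem stmt2 (N : ℕ) (hN : 0 < N) (V : Set ℕ) (hV : ∀ n ∈ V, n < N) :
    (∀ s s' : Fin N → ℂ,
      (∀ n : Fin N, (n : ℕ) ∈ V → s n = 0) →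
      (∀ n : Fin N, (n : ℕ) ∈ V → s' n = 0) →
      (∀ m : Fin N, IsGaussianInt ((dft N).mulVec s m - (dft N).mulVec s' m)) →
      ∀ n : Fin N, (n : ℕ) ≠ 0 → s n = s' n) ↔
    (∀ c : Polynomial ℚ⟮Complex.I⟯, c.Monic → Irreducible c → c ∣ (X ^ N - 1) →
      c ≠ X - 1 →
      ∃ n ∈ V, Polynomial.aeval (Complex.exp (2 * Real.pi * Complex.I * n / N)) c = 0) := by
  exact ⟨fun hid => mp N hN V hV hid, fun hpoly => mpr N hN V hV hpoly⟩
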